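/- Let C and D be additive categories with shift by ℤ that are pretriangulated and have all small coproducts, and let adj : F ⊣ G be an adjunction with F : C ⥤ D and G : D ⥤ C both triangulated functors compatible with the shifts (the adjunction commuting with the shift data), and with G preserving all small coproducts. Suppose S is a set of objects of C such that every localizing class of objects of C (closed under isomorphisms, shifts, extensions along distinguished triangles, and small coproducts) containing S contains all objects of C, and T is a set of objects of D with the analogous property in D. If the unit map X → G(F(X)) is an isomorphism for every X ∈ S and the counit map F(G(Y)) → Y is an isomorphism for every Y ∈ T, then F is an equivalence of categories with quasi-inverse G. -/

import Mathlib

open CategoryTheory Limits Pretriangulated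

universe w v u

/-- A class of objects of a pretriangulated category with all small coproducts is
*localizing* if it is closed under isomorphisms, under the shifts, under extensions
along distinguished triangles, and under small coproducts. -/
def IsLocalizingClass {C : Type u} [Category.{v} C]
    [HasZeroObject C] [Preadditive C] [HasShift C ℤ]
    [∀ n : ℤ, (shiftFunctor C n).Additive] [Pretriangulated C]
    [HasCoproducts.{w} C] (P : Set C) : Prop :=
  (∀ X Y : C, (X ≅ Y) → X ∈ P → Y ∈ P) ∧
  (∀ (X : C) (n : ℤ), X ∈ P → (X⟦n⟧) ∈ P) ∧
  (∀ T : Triangle C, (T ∈ distTriang C) → T.obj₁ ∈ P → T.obj₂ ∈ P → T.obj₃ ∈ P) ∧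
  (∀ (J : Type w) (X : J → C), (∀ j : J, X j ∈ P) → (∐ X) ∈ P)

universe w' v₁ v₂ u₁ u₂

/-- Auxiliary lemma: given a natural transformation `τ : F₁ ⟶ F₂` between triangulated
endofunctors commuting with the shift and preserving coproducts, the class of objects on
which `τ` is an isomorphism is localizing. -/
lemma isLocalizingClass_isIso_app {C : Type u} [Category.{v} C]
    [HasZeroObject C] [Preadditive C] [HasShift C ℤ]
    [∀ n : ℤ, (shiftFunctor C n).Additive] [Pretriangulated C]
    [HasCoproducts.{w} C] {F₁ F₂ : C ⥤ C} [F₁.CommShift ℤ] [F₂.CommShift ℤ]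
    [F₁.IsTriangulated] [F₂.IsTriangulated]
    [∀ J : Type w, PreservesColimitsOfShape (Discrete J) F₁]
    [∀ J : Type w, PreservesColimitsOfShape (Discrete J) F₂]
    (τ : F₁ ⟶ F₂) [NatTrans.CommShift τ ℤ] :
    IsLocalizingClass.{w} {X : C | IsIso (τ.app X)} := by
  refine ⟨?_, ?_, ?_, ?_⟩
  · intro X Y e hX
    haveI : IsIso (τ.app X) := hX
    have : τ.app Y = inv (F₁.map e.hom) ≫ τ.app X ≫ F₂.map e.hom := by
      rw [← τ.naturality e.hom, IsIso.inv_hom_id_assoc]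
    rw [Set.mem_setOf_eq, this]
    infer_instance
  · intro X n hX
    haveI : IsIso (τ.app X) := hX
    rw [Set.mem_setOf_eq, NatTrans.app_shift τ n X]
    infer_instance
  · intro T hT h₁ h₂
    have φc₃ : F₁.map T.mor₃ ≫ ((F₁.commShiftIso (1 : ℤ)).hom.app T.obj₁ ≫
        (τ.app T.obj₁)⟦(1 : ℤ)⟧') =
        τ.app T.obj₃ ≫ F₂.map T.mor₃ ≫ (F₂.commShiftIso (1 : ℤ)).hom.app T.obj₁ := by
      rw [NatTrans.shift_app_comm τ (1 : ℤ) T.obj₁, ← τ.naturality_assoc]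
    let φ : F₁.mapTriangle.obj T ⟶ F₂.mapTriangle.obj T :=
      { hom₁ := τ.app T.obj₁
        hom₂ := τ.app T.obj₂
        hom₃ := τ.app T.obj₃
        comm₁ := τ.naturality T.mor₁
        comm₂ := τ.naturality T.mor₂
        comm₃ := by rw [← Category.assoc] at φc₃; exact φc₃ }
    have := h₁
    have := h₂
    exact isIso₃_of_isIso₁₂ φ (F₁.map_distinguished T hT) (F₂.map_distinguished T hT)
      (by exact h₁) (by exact h₂)
  · intro J X hX
    have : ∀ j, IsIso (τ.app (X j)) := hX
    have key : sigmaComparison F₁ X ≫ τ.app (∐ X) =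
        Limits.Sigma.map (fun j => τ.app (X j)) ≫ sigmaComparison F₂ X := by
      ext j
      simp only [ι_comp_sigmaComparison_assoc, ι_comp_sigmaComparison,
        Limits.ι_colimMap_assoc]
      rw [τ.naturality]
      simp
    have : τ.app (∐ X) = inv (sigmaComparison F₁ X) ≫
        Limits.Sigma.map (fun j => τ.app (X j)) ≫ sigmaComparison F₂ X := by
      rw [← key, IsIso.inv_hom_id_assoc]
    rw [Set.mem_setOf_eq, this]
    infer_instance

/-- Let `adj : F ⊣ G` be an adjunction of triangulated functors, compatible with the
shifts, between pretriangulated categories with all small coproducts, such that `G`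
preserves small coproducts. If `C` is generated by a set `S` of objects (the only
localizing class containing `S` is the class of all objects), `D` is generated by a
set `T`, the unit of the adjunction is an isomorphism on members of `S`, and the
counit is an isomorphism on members of `T`, then `F` is an equivalence of categories
with quasi-inverse `G`. -/
theorem isEquivalence_of_units_iso_on_generators
    {C : Type u₁} {D : Type u₂} [Category.{v₁} C] [Category.{v₂} D]
    [HasZeroObject C] [HasZeroObject D] [Preadditive C] [Preadditive D]
    [HasShift C ℤ] [HasShift D ℤ]
    [∀ n : ℤ, (shiftFunctor C n).Additive] [∀ n : ℤ, (shiftFunctor D n).Additive]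
    [Pretriangulated C] [Pretriangulated D]
    [HasCoproducts.{w'} C] [HasCoproducts.{w'} D]
    {F : C ⥤ D} {G : D ⥤ C} [F.Additive] [G.Additive] [F.CommShift ℤ] [G.CommShift ℤ]
    [F.IsTriangulated] [G.IsTriangulated]
    [∀ J : Type w', PreservesColimitsOfShape (Discrete J) G]
    (adj : F ⊣ G) [NatTrans.CommShift adj.unit ℤ] [NatTrans.CommShift adj.counit ℤ]
    (S : Set C) (T : Set D)
    (hS : ∀ P : Set C, IsLocalizingClass.{w'} P → S ⊆ P → ∀ X : C, X ∈ P)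
    (hT : ∀ P : Set D, IsLocalizingClass.{w'} P → T ⊆ P → ∀ Y : D, Y ∈ P)
    (hunit : ∀ X ∈ S, IsIso (adj.unit.app X))
    (hcounit : ∀ Y ∈ T, IsIso (adj.counit.app Y)) :
    ∃ e : C ≌ D, e.functor = F ∧ e.inverse = G := by
  haveI : PreservesColimitsOfSize.{w', w'} F := adj.leftAdjoint_preservesColimits
  have hu : ∀ X : C, IsIso (adj.unit.app X) := by
    have := isLocalizingClass_isIso_app.{w'} adj.unit
    exact hS _ this (fun X hX => hunit X hX)
  have hc : ∀ Y : D, IsIso (adj.counit.app Y) := by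
    have := isLocalizingClass_isIso_app.{w'} adj.counit
    exact hT _ this (fun Y hY => hcounit Y hY)
  exact ⟨adj.toEquivalence, rfl, rfl⟩
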